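/- Let Δ : [0,∞) → [1,∞) be nondecreasing and such that t ↦ (log Δ(t))/t is nonincreasing on (0,∞). Put κ = 4/3, δ(t) = log((1+t)^2 Δ(t)^3), and Γ(s) = sup_{t ≥ 0} e^{δ(t) − s t} for s > 0. Let T > 0 and σ > 0 satisfy ∫_T^∞ δ(t)/t^2 dt ≤ σ · log κ. Define t_ν = κ^{ν+1} T and σ_ν = δ(t_ν)/t_ν for ν ≥ 0. Then: (1) the sequence (σ_ν)_{ν≥0} is positive and nonincreasing; (2) ∑_{ν≥0} σ_ν ≤ σ; (3) Γ(σ_ν) ≤ e^{σ_ν t_ν} for every ν; and (4) the infinite product ∏_{ν≥0} Γ(σ_ν)^{κ^{−(ν+1)}} is at most e^{σ T}. -/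

import Mathlib

open Real Filter MeasureTheory
open scoped ENNReal

lemma log1p_div_anti : AntitoneOn (fun t => Real.log (1 + t) / t) (Set.Ioi 0) := by
  intro a ha b hb hab
  simp only [Set.mem_Ioi] at ha hb
  simp only
  have hp : 1 ≤ b / a := (one_le_div ha).2 hab
  have hB : 1 + b ≤ (1 + a) ^ (b / a : ℝ) := by
    have := one_add_mul_self_le_rpow_one_add (by linarith : (-1 : ℝ) ≤ a) hp
    rwa [div_mul_cancel₀ _ ha.ne'] at this
  have h1a : (0 : ℝ) < 1 + a := by linarith
  have hlog : Real.log (1 + b) ≤ b / a * Real.log (1 + a) := by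
    calc Real.log (1 + b) ≤ Real.log ((1 + a) ^ (b / a : ℝ)) :=
          Real.log_le_log (by linarith) hB
      _ = b / a * Real.log (1 + a) := Real.log_rpow h1a _
  rw [div_le_div_iff₀ hb ha]
  have h2 := mul_le_mul_of_nonneg_right hlog ha.le
  rw [div_mul_eq_mul_div, div_mul_cancel₀ _ ha.ne'] at h2
  rw [mul_comm b (Real.log (1+a))] at h2
  linarith

/-- Appendix lemma bounding `Ξ(σ)`: for an approximation-type function `Δ`
(nondecreasing, values in `[1,∞)`, with `log Δ(t) / t` nonincreasing on `(0,∞)`),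
`κ = 4/3`, `δf t = log((1+t)² Δ(t)³)` and `Γ s = sup_{t ≥ 0} e^{δf t - s t}`,
if `T, σ > 0` satisfy `∫_T^∞ δf(t)/t² dt ≤ σ log κ`, then with `t_ν = κ^{ν+1} T` and
`σ_ν = δf(t_ν)/t_ν`: the `σ_ν` are positive and nonincreasing, `∑ σ_ν ≤ σ`,
`Γ(σ_ν) ≤ e^{σ_ν t_ν}`, and the infinite product
`∏_{ν≥0} Γ(σ_ν)^{κ^{-(ν+1)}}` (the supremum of its partial products) is at most `e^{σ T}`. -/
theorem xi_product_bound (Δ : ℝ → ℝ)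
    (hΔ1 : ∀ t, 0 ≤ t → 1 ≤ Δ t)
    (hΔmono : MonotoneOn Δ (Set.Ici 0))
    (hΔdec : AntitoneOn (fun t => Real.log (Δ t) / t) (Set.Ioi 0))
    (κ : ℝ) (hκ : κ = 4 / 3)
    (δf : ℝ → ℝ) (hδf : ∀ t, δf t = Real.log ((1 + t) ^ 2 * (Δ t) ^ 3))
    (Γ : ℝ → ℝ≥0∞)
    (hΓ : ∀ s : ℝ, Γ s =
      ⨆ (t : ℝ) (_ : 0 ≤ t), ENNReal.ofReal (Real.exp (δf t - s * t)))
    (T σ : ℝ) (hT : 0 < T) (hσ : 0 < σ)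
    (hInt : IntegrableOn (fun t => δf t / t ^ 2) (Set.Ioi T))
    (hIntLe : (∫ t in Set.Ioi T, δf t / t ^ 2) ≤ σ * Real.log κ)
    (ts σs : ℕ → ℝ)
    (hts : ∀ ν : ℕ, ts ν = κ ^ (ν + 1) * T)
    (hσs : ∀ ν : ℕ, σs ν = δf (ts ν) / ts ν) :
    (∀ ν : ℕ, 0 < σs ν) ∧
    Antitone σs ∧
    (Summable σs ∧ (∑' ν : ℕ, σs ν) ≤ σ) ∧
    (∀ ν : ℕ, Γ (σs ν) ≤ ENNReal.ofReal (Real.exp (σs ν * ts ν))) ∧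
    (⨆ N : ℕ, ∏ ν ∈ Finset.range N, Γ (σs ν) ^ ((κ ^ (ν + 1))⁻¹ : ℝ)) ≤
      ENNReal.ofReal (Real.exp (σ * T)) := by
  have hκ1 : (1 : ℝ) < κ := by rw [hκ]; norm_num
  have hκ0 : (0 : ℝ) < κ := by linarith
  have hlogκ : 0 < Real.log κ := Real.log_pos hκ1
  have hΔpos : ∀ t, 0 ≤ t → 0 < Δ t := fun t ht => lt_of_lt_of_le one_pos (hΔ1 t ht)
  -- nonnegativity of δf
  have hδ0 : ∀ t, 0 ≤ t → 0 ≤ δf t := by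
    intro t ht
    rw [hδf]
    apply Real.log_nonneg
    have h1 : (1 : ℝ) ≤ (1 + t) ^ 2 := by nlinarith
    have h2 : (1 : ℝ) ≤ (Δ t) ^ 3 := one_le_pow₀ (hΔ1 t ht)
    nlinarith
  -- positivity of δf on (0,∞)
  have hδpos : ∀ t, 0 < t → 0 < δf t := by
    intro t ht
    rw [hδf]
    apply Real.log_pos
    have h1 : (1 : ℝ) < (1 + t) ^ 2 := by nlinarith
    have h2 : (1 : ℝ) ≤ (Δ t) ^ 3 := one_le_pow₀ (hΔ1 t ht.le)
    nlinarith
  -- monotonicity of δf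
  have hδmono : ∀ s t, 0 ≤ s → s ≤ t → δf s ≤ δf t := by
    intro s t hs hst
    have ht : (0 : ℝ) ≤ t := hs.trans hst
    rw [hδf, hδf]
    apply Real.log_le_log
    · have := hΔpos s hs
      positivity
    · have hΔ := hΔmono hs ht hst
      have h1 : (1 + s) ^ 2 ≤ (1 + t) ^ 2 := by nlinarith
      have h2 : (Δ s) ^ 3 ≤ (Δ t) ^ 3 := by
        apply pow_le_pow_left₀ (hΔpos s hs).le hΔ
      have h3 : (0:ℝ) ≤ (1 + s) ^ 2 := by positivity
      have h4 : (0:ℝ) ≤ (Δ s) ^ 3 := by have := hΔpos s hs; positivity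
      nlinarith
  -- splitting δf
  have hδsplit : ∀ t, 0 < t → δf t = 2 * Real.log (1 + t) + 3 * Real.log (Δ t) := by
    intro t ht
    have h1 : (0:ℝ) < 1 + t := by linarith
    have h2 := hΔpos t ht.le
    rw [hδf, Real.log_mul (by positivity) (by positivity), Real.log_pow, Real.log_pow]
    push_cast
    ring
  -- antitonicity of δf t / t
  have hganti : AntitoneOn (fun t => δf t / t) (Set.Ioi 0) := by
    intro a ha b hb hab
    have h1 := log1p_div_anti ha hb hab
    have h2 := hΔdec ha hb hab
    simp only [Set.mem_Ioi] at ha hb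
    simp only at h1 h2 ⊢
    rw [hδsplit a ha, hδsplit b hb]
    have ea : (2 * Real.log (1 + a) + 3 * Real.log (Δ a)) / a
        = 2 * (Real.log (1 + a) / a) + 3 * (Real.log (Δ a) / a) := by ring
    have eb : (2 * Real.log (1 + b) + 3 * Real.log (Δ b)) / b
        = 2 * (Real.log (1 + b) / b) + 3 * (Real.log (Δ b) / b) := by ring
    rw [ea, eb]
    linarith
  -- positivity of ts, σs
  have htspos : ∀ ν, 0 < ts ν := fun ν => by rw [hts]; positivity
  have hσpos : ∀ ν, 0 < σs ν := by
    intro ν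
    rw [hσs]
    exact div_pos (hδpos _ (htspos ν)) (htspos ν)
  -- monotonicity of ts
  have htsmono : ∀ ν, ts ν ≤ ts (ν + 1) := by
    intro ν
    rw [hts, hts]
    have h := pow_le_pow_right₀ hκ1.le (by omega : ν + 1 ≤ ν + 1 + 1)
    nlinarith
  -- antitonicity of σs
  have hσanti : Antitone σs := by
    apply antitone_nat_of_succ_le
    intro ν
    rw [hσs, hσs]
    exact hganti (Set.mem_Ioi.2 (htspos ν)) (Set.mem_Ioi.2 (htspos (ν + 1))) (htsmono ν)
  -- the geometric partition points
  set a : ℕ → ℝ := fun ν => κ ^ ν * T with ha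
  have hapos : ∀ ν, 0 < a ν := fun ν => by simp only [ha]; positivity
  have haT : ∀ ν, T ≤ a ν := by
    intro ν
    simp only [ha]
    have : (1 : ℝ) ≤ κ ^ ν := one_le_pow₀ hκ1.le
    nlinarith
  have hasucc : ∀ ν, a (ν + 1) = κ * a ν := by
    intro ν
    simp only [ha, pow_succ]
    ring
  have hamono : ∀ ν, a ν ≤ a (ν + 1) := by
    intro ν
    rw [hasucc]
    nlinarith [hapos ν]
  have htsa : ∀ ν, ts ν = a (ν + 1) := fun ν => by rw [hts]
  -- per-interval lower bound
  have hkey : ∀ ν : ℕ, σs ν * Real.log κ ≤ ∫ t in Set.Ioc (a ν) (a (ν + 1)), δf t / t ^ 2 := by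
    intro ν
    have hsub : Set.Ioc (a ν) (a (ν + 1)) ⊆ Set.Ioi T :=
      fun x hx => (haT ν).trans_lt hx.1
    have hint1 : IntegrableOn (fun t => δf t / t ^ 2) (Set.Ioc (a ν) (a (ν + 1))) :=
      hInt.mono_set hsub
    have hii : IntervalIntegrable (fun t => σs ν * t⁻¹) volume (a ν) (a (ν + 1)) := by
      apply IntervalIntegrable.const_mul
      apply intervalIntegral.intervalIntegrable_inv
      · intro x hx
        rw [Set.uIcc_of_le (hamono ν)] at hx
        exact ((hapos ν).trans_le hx.1).ne'
      · exact continuousOn_id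
    have hint2 : IntegrableOn (fun t => σs ν * t⁻¹) (Set.Ioc (a ν) (a (ν + 1))) := hii.1
    have hcalc : ∫ t in Set.Ioc (a ν) (a (ν + 1)), σs ν * t⁻¹ = σs ν * Real.log κ := by
      rw [← intervalIntegral.integral_of_le (hamono ν), intervalIntegral.integral_const_mul,
        integral_inv_of_pos (hapos ν) (hapos (ν + 1)), hasucc ν,
        mul_div_assoc, div_self (hapos ν).ne', mul_one]
    rw [← hcalc]
    apply setIntegral_mono_on hint2 hint1 measurableSet_Ioc
    intro t ht
    have ht0 : 0 < t := (hapos ν).trans ht.1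
    have hge : σs ν ≤ δf t / t := by
      rw [hσs, htsa]
      exact hganti (Set.mem_Ioi.2 ht0) (Set.mem_Ioi.2 (hapos (ν + 1))) ht.2
    calc σs ν * t⁻¹ ≤ δf t / t * t⁻¹ :=
          mul_le_mul_of_nonneg_right hge (inv_nonneg.2 ht0.le)
      _ = δf t / t ^ 2 := by rw [sq, ← div_div, div_eq_mul_inv (δf t / t) t]
  -- sum of intervals
  have hsum_int : ∀ N : ℕ, ∑ ν ∈ Finset.range N, σs ν * Real.log κ
      ≤ ∫ t in Set.Ioc T (a N), δf t / t ^ 2 := by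
    intro N
    induction N with
    | zero =>
      have : a 0 = T := by simp [ha]
      simp [this, Set.Ioc_self]
    | succ N ih =>
      rw [Finset.sum_range_succ]
      have hsplit : ∫ t in Set.Ioc T (a (N + 1)), δf t / t ^ 2
          = (∫ t in Set.Ioc T (a N), δf t / t ^ 2)
            + ∫ t in Set.Ioc (a N) (a (N + 1)), δf t / t ^ 2 := by
        rw [← setIntegral_union (Set.Ioc_disjoint_Ioc_of_le le_rfl) measurableSet_Ioc
          (hInt.mono_set (Set.Ioc_subset_Ioi_self))
          (hInt.mono_set (fun x hx => (haT N).trans_lt hx.1)),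
          Set.Ioc_union_Ioc_eq_Ioc (haT N) (hamono N)]
      rw [hsplit]
      exact add_le_add ih (hkey N)
  -- bound by the full integral
  have hIoc_le : ∀ N : ℕ, ∫ t in Set.Ioc T (a N), δf t / t ^ 2
      ≤ ∫ t in Set.Ioi T, δf t / t ^ 2 := by
    intro N
    apply setIntegral_mono_set hInt
    · refine (ae_restrict_mem measurableSet_Ioi).mono fun t ht => ?_
      exact div_nonneg (hδ0 t (hT.trans ht).le) (by positivity)
    · exact HasSubset.Subset.eventuallyLE Set.Ioc_subset_Ioi_self
  -- partial sums bounded by σ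
  have hpartial : ∀ N : ℕ, ∑ ν ∈ Finset.range N, σs ν ≤ σ := by
    intro N
    have h1 : (∑ ν ∈ Finset.range N, σs ν) * Real.log κ ≤ σ * Real.log κ := by
      rw [Finset.sum_mul]
      exact ((hsum_int N).trans (hIoc_le N)).trans hIntLe
    exact le_of_mul_le_mul_right h1 hlogκ
  have hsummable : Summable σs := summable_of_sum_range_le (fun ν => (hσpos ν).le) hpartial
  have htsum : (∑' ν : ℕ, σs ν) ≤ σ :=
    Real.tsum_le_of_sum_range_le (fun ν => (hσpos ν).le) hpartial
  -- the Γ bound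
  have hΓb : ∀ ν : ℕ, Γ (σs ν) ≤ ENNReal.ofReal (Real.exp (σs ν * ts ν)) := by
    intro ν
    rw [hΓ]
    refine iSup₂_le fun t ht => ?_
    apply ENNReal.ofReal_le_ofReal
    rw [Real.exp_le_exp]
    have hst : σs ν * ts ν = δf (ts ν) := by
      rw [hσs, div_mul_cancel₀ _ (htspos ν).ne']
    rcases le_or_gt t (ts ν) with hle | hlt
    · have h1 := hδmono t (ts ν) ht hle
      have h2 : 0 ≤ σs ν * t := mul_nonneg (hσpos ν).le ht
      linarith
    · have ht0 : 0 < t := (htspos ν).trans hlt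
      have h2 : δf t / t ≤ σs ν := by
        rw [hσs]
        exact hganti (Set.mem_Ioi.2 (htspos ν)) (Set.mem_Ioi.2 ht0) hlt.le
      have h3 : δf t ≤ σs ν * t := by
        rw [← div_le_iff₀ ht0] at *
        exact h2
      have h4 : 0 ≤ σs ν * ts ν := mul_nonneg (hσpos ν).le (htspos ν).le
      linarith
  -- the product bound
  have hprodN : ∀ N : ℕ, (∏ ν ∈ Finset.range N, Γ (σs ν) ^ ((κ ^ (ν + 1))⁻¹ : ℝ))
      ≤ ENNReal.ofReal (Real.exp (σ * T)) := by
    intro N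
    have step : ∀ ν ∈ Finset.range N, Γ (σs ν) ^ ((κ ^ (ν + 1))⁻¹ : ℝ)
        ≤ ENNReal.ofReal (Real.exp (σs ν * T)) := by
      intro ν _
      have hr : (0 : ℝ) ≤ (κ ^ (ν + 1))⁻¹ := by positivity
      calc Γ (σs ν) ^ ((κ ^ (ν + 1))⁻¹ : ℝ)
          ≤ (ENNReal.ofReal (Real.exp (σs ν * ts ν))) ^ ((κ ^ (ν + 1))⁻¹ : ℝ) :=
            ENNReal.rpow_le_rpow (hΓb ν) hr
        _ = ENNReal.ofReal ((Real.exp (σs ν * ts ν)) ^ ((κ ^ (ν + 1))⁻¹ : ℝ)) :=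
            ENNReal.ofReal_rpow_of_pos (Real.exp_pos _)
        _ = ENNReal.ofReal (Real.exp (σs ν * T)) := by
            rw [← Real.exp_mul]
            congr 1
            rw [hts]
            have hκν : (κ : ℝ) ^ (ν + 1) ≠ 0 := by positivity
            field_simp
    calc (∏ ν ∈ Finset.range N, Γ (σs ν) ^ ((κ ^ (ν + 1))⁻¹ : ℝ))
        ≤ ∏ ν ∈ Finset.range N, ENNReal.ofReal (Real.exp (σs ν * T)) :=
          Finset.prod_le_prod' step
      _ = ENNReal.ofReal (∏ ν ∈ Finset.range N, Real.exp (σs ν * T)) :=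
          (ENNReal.ofReal_prod_of_nonneg fun _ _ => (Real.exp_pos _).le).symm
      _ = ENNReal.ofReal (Real.exp (∑ ν ∈ Finset.range N, σs ν * T)) := by
          rw [Real.exp_sum]
      _ ≤ ENNReal.ofReal (Real.exp (σ * T)) := by
          apply ENNReal.ofReal_le_ofReal
          rw [Real.exp_le_exp, ← Finset.sum_mul]
          exact mul_le_mul_of_nonneg_right (hpartial N) hT.le
  exact ⟨hσpos, hσanti, ⟨hsummable, htsum⟩, hΓb, iSup_le hprodN⟩
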